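/- arXiv:2111.01279 — 2 statements merged into one kernel-verified Lean document; each statement's English description precedes it below -/
import Mathlib

section
/- Let π be a sum-indecomposable pattern (a permutation of 0,1,…,j−1 with j ≥ 3 such that there is no i ∈ [1, j−1] with max{π₁,…,π_i} < min{π_{i+1},…,π_j}). Let c_k denote the number of π-avoiding ascent sequences of length k. Then c_{m+n} ≥ c_m · c_n for all m, n ≥ 1. -/
open Filter Topology

/-- Number of ascents in a sequence (list) of naturals. -/
def asc (s : List ℕ) : ℕ :=
  ((s.zip s.tail).filter (fun p => p.1 < p.2)).length

/-- `s` is an ascent sequence: first entry `0`, and each later entry is at most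
one more than the number of ascents of the preceding prefix. -/
def IsAscentSeq (s : List ℕ) : Prop :=
  (0 < s.length → s.getD 0 0 = 0) ∧
  ∀ i, 0 < i → i < s.length → s.getD i 0 ≤ asc (s.take i) + 1

/-- `s` is a weak ascent sequence: every entry is at most the number of ascents. -/
def IsWeakAscentSeq (s : List ℕ) : Prop :=
  ∀ x ∈ s, x ≤ asc s

/-- `s` contains the pattern `p`: some subsequence of `s` is order-isomorphic
(including equalities) to `p`. -/
def ContainsPattern (s p : List ℕ) : Prop :=
  ∃ idx : Fin p.length → ℕ, StrictMono idx ∧ (∀ a, idx a < s.length) ∧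
    ∀ a b : Fin p.length, p.get a < p.get b ↔ s.getD (idx a) 0 < s.getD (idx b) 0

def AvoidsPattern (s p : List ℕ) : Prop := ¬ ContainsPattern s p

/-- A pattern of length `j` is a permutation of `0,…,j-1`. -/
def IsPattern (p : List ℕ) : Prop := List.Perm p (List.range p.length)

/-- Sum-indecomposable: no proper prefix whose entries are all smaller than
all entries of the complementary suffix. -/
def SumIndecomposable (p : List ℕ) : Prop :=
  ¬ ∃ i, 0 < i ∧ i < p.length ∧ ∀ x ∈ p.take i, ∀ y ∈ p.drop i, x < y

/-- Number of `p`-avoiding ascent sequences of length `k`. -/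
noncomputable def ascentAvoidCount (p : List ℕ) (k : ℕ) : ℕ :=
  {s : List ℕ | s.length = k ∧ IsAscentSeq s ∧ AvoidsPattern s p}.ncard

/-- Number of `p`-avoiding weak ascent sequences of length `k`. -/
noncomputable def weakAvoidCount (p : List ℕ) (k : ℕ) : ℕ :=
  {s : List ℕ | s.length = k ∧ IsWeakAscentSeq s ∧ AvoidsPattern s p}.ncard

def listMax (s : List ℕ) : ℕ := s.foldr max 0
def listMin (s : List ℕ) : ℕ := s.foldr min (listMax s)

/-- Reverse-complement map: `m j = max + min - n (k+1-j)`. -/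
def revComp (s : List ℕ) : List ℕ :=
  s.reverse.map (fun x => listMax s + listMin s - x)

/-- Occurrence of pattern 000: three equal entries. -/
def Contains000 (s : List ℕ) : Prop :=
  ∃ a b c, a < b ∧ b < c ∧ c < s.length ∧
    s.getD a 0 = s.getD b 0 ∧ s.getD b 0 = s.getD c 0

/-- Occurrence of pattern 100: `n i₁ > n i₂ = n i₃`. -/
def Contains100 (s : List ℕ) : Prop :=
  ∃ a b c, a < b ∧ b < c ∧ c < s.length ∧
    s.getD b 0 < s.getD a 0 ∧ s.getD b 0 = s.getD c 0

/-- Occurrence of pattern 110: `n i₁ = n i₂ > n i₃`. -/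
def Contains110 (s : List ℕ) : Prop :=
  ∃ a b c, a < b ∧ b < c ∧ c < s.length ∧
    s.getD a 0 = s.getD b 0 ∧ s.getD c 0 < s.getD b 0

/-- Occurrence of pattern 120: `n i₂ > n i₁ > n i₃`. -/
def Contains120 (s : List ℕ) : Prop :=
  ∃ a b c, a < b ∧ b < c ∧ c < s.length ∧
    s.getD a 0 < s.getD b 0 ∧ s.getD c 0 < s.getD a 0

/-- Occurrence of pattern 201: `n i₁ > n i₃ > n i₂`. -/
def Contains201 (s : List ℕ) : Prop :=
  ∃ a b c, a < b ∧ b < c ∧ c < s.length ∧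
    s.getD c 0 < s.getD a 0 ∧ s.getD b 0 < s.getD c 0

/-- Occurrence of pattern 012: `n i₁ < n i₂ < n i₃`. -/
def Contains012 (s : List ℕ) : Prop :=
  ∃ a b c, a < b ∧ b < c ∧ c < s.length ∧
    s.getD a 0 < s.getD b 0 ∧ s.getD b 0 < s.getD c 0

/-- Occurrence of pattern 011: `n i₁ < n i₂ = n i₃`. -/
def Contains011 (s : List ℕ) : Prop :=
  ∃ a b c, a < b ∧ b < c ∧ c < s.length ∧
    s.getD a 0 < s.getD b 0 ∧ s.getD b 0 = s.getD c 0

/-- Occurrence of pattern 021: `n i₁ < n i₃ < n i₂`. -/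
def Contains021 (s : List ℕ) : Prop :=
  ∃ a b c, a < b ∧ b < c ∧ c < s.length ∧
    s.getD a 0 < s.getD c 0 ∧ s.getD c 0 < s.getD b 0

/-- Occurrence of pattern 102: `n i₂ < n i₁ < n i₃`. -/
def Contains102 (s : List ℕ) : Prop :=
  ∃ a b c, a < b ∧ b < c ∧ c < s.length ∧
    s.getD b 0 < s.getD a 0 ∧ s.getD a 0 < s.getD c 0

/-- The construction `C = 0101⋯01 W̃₁⋯W̃ₖ` from weak ascent sequences. -/
def buildC (k : ℕ) (W : Fin k → List ℕ) : List ℕ :=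
  (List.replicate k ([0,1] : List ℕ)).flatten ++
    (List.ofFn (fun h : Fin k =>
      (W h).map (fun x =>
        x + 1 + ∑ j ∈ Finset.univ.filter (fun j => j < h), listMax (W j)))).flatten

theorem asc_nil : asc [] = 0 := rfl
theorem asc_single (a : ℕ) : asc [a] = 0 := rfl
theorem asc_cons_cons (a b : ℕ) (t : List ℕ) :
    asc (a :: b :: t) = (if a < b then 1 else 0) + asc (b :: t) := by
  simp only [asc, List.zip, List.tail]
  simp [List.filter]
  split <;> rename_i h <;> simp_all [Nat.add_comm]

theorem asc_cons_le (a : ℕ) (t : List ℕ) : asc t ≤ asc (a :: t) := by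
  cases t with
  | nil => simp [asc_nil, asc_single]
  | cons b t => rw [asc_cons_cons]; omega

theorem asc_append_le (l r : List ℕ) : asc l + asc r ≤ asc (l ++ r) := by
  induction l with
  | nil => simp [asc_nil]
  | cons a t ih =>
    cases t with
    | nil => simpa [asc_single] using asc_cons_le a r
    | cons b t =>
      rw [asc_cons_cons]
      have : (a :: b :: t) ++ r = a :: b :: (t ++ r) := rfl
      rw [this, asc_cons_cons]
      rw [List.cons_append] at ih
      omega

theorem asc_take_le (i : ℕ) (s : List ℕ) : asc (s.take i) ≤ asc s := by
  have h := asc_append_le (s.take i) (s.drop i)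
  rw [List.take_append_drop] at h; omega

theorem asc_le_length (s : List ℕ) : asc s ≤ s.length := by
  calc ((s.zip s.tail).filter _).length ≤ (s.zip s.tail).length := List.length_filter_le _ _
  _ ≤ s.length := by rw [List.length_zip]; omega

theorem asc_map_add (N : ℕ) (s : List ℕ) : asc (s.map (· + N)) = asc s := by
  induction s with
  | nil => rfl
  | cons a t ih =>
    cases t with
    | nil => rfl
    | cons b t =>
      simp only [List.map_cons] at ih ⊢
      rw [asc_cons_cons, asc_cons_cons, ih]
      congr 1
      simp [Nat.add_lt_add_iff_right]

theorem asc_append_singleton (l : List ℕ) (a b : ℕ) :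
    asc (l ++ [a, b]) = asc (l ++ [a]) + (if a < b then 1 else 0) := by
  induction l with
  | nil => simp only [List.nil_append]; rw [asc_cons_cons]; simp [asc_single]
  | cons c t ih =>
    cases t with
    | nil => simp only [List.cons_append, List.nil_append] at ih ⊢
             rw [asc_cons_cons, ih, asc_cons_cons]; omega
    | cons d t =>
      simp only [List.cons_append] at ih ⊢
      rw [asc_cons_cons, asc_cons_cons, ih]; omega

theorem take_two (s : List ℕ) (j : ℕ) (h : j + 1 < s.length) :
    s.take (j + 2) = s.take j ++ [s.getD j 0, s.getD (j+1) 0] := by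
  rw [List.getD_eq_getElem s 0 (show j < s.length by omega), List.getD_eq_getElem s 0 h,
    ← List.take_concat_get h, ← List.take_concat_get (show j < s.length by omega)]
  simp only [List.concat_eq_append, List.append_assoc, List.cons_append, List.nil_append]

theorem asc_take_succ (s : List ℕ) (j : ℕ) (h : j + 1 < s.length) :
    asc (s.take (j + 2)) = asc (s.take (j+1)) +
      (if s.getD j 0 < s.getD (j+1) 0 then 1 else 0) := by
  rw [take_two s j h]
  have h1 : s.take (j+1) = s.take j ++ [s.getD j 0] := by
    rw [List.getD_eq_getElem s 0 (show j < s.length by omega),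
      ← List.take_concat_get (show j < s.length by omega)]
    simp only [List.concat_eq_append, List.append_assoc, List.cons_append, List.nil_append]
  rw [h1, asc_append_singleton]

theorem entry_le_asc_take {s : List ℕ} (hs : IsAscentSeq s) :
    ∀ i, i < s.length → s.getD i 0 ≤ asc (s.take (i+1)) := by
  intro i
  induction i using Nat.strong_induction_on with
  | _ i ih =>
    intro hi
    match i with
    | 0 => rw [hs.1 (by omega)]; omega
    | (j+1) =>
      have step := asc_take_succ s j hi
      by_cases hlt : s.getD j 0 < s.getD (j+1) 0
      · have := hs.2 (j+1) (by omega) hi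
        rw [step, if_pos hlt]; omega
      · have hj := ih j (by omega) (by omega)
        rw [step, if_neg hlt]; omega

theorem entry_le_asc {s : List ℕ} (hs : IsAscentSeq s) :
    ∀ i, i < s.length → s.getD i 0 ≤ asc s := by
  intro i hi
  exact le_trans (entry_le_asc_take hs i hi) (asc_take_le _ _)

theorem le_listMax {s : List ℕ} {x : ℕ} (hx : x ∈ s) : x ≤ listMax s := by
  induction s with
  | nil => simp at hx
  | cons a t ih =>
    simp [listMax] at *
    rcases hx with rfl | hx
    · left; rfl
    · right; exact ih hx

theorem getD_le_listMax {s : List ℕ} {i : ℕ} (hi : i < s.length) :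
    s.getD i 0 ≤ listMax s := by
  rw [List.getD_eq_getElem s 0 hi]
  exact le_listMax (List.getElem_mem hi)

theorem listMax_le {s : List ℕ} {c : ℕ} (h : ∀ x ∈ s, x ≤ c) : listMax s ≤ c := by
  induction s with
  | nil => simp [listMax]
  | cons a t ih =>
    simp only [listMax, List.foldr_cons] at *
    exact max_le (h a (by simp)) (ih fun x hx => h x (by simp [hx]))

theorem listMax_le_asc {s : List ℕ} (hs : IsAscentSeq s) : listMax s ≤ asc s := by
  apply listMax_le
  intro x hx
  obtain ⟨i, hi, rfl⟩ := List.mem_iff_getElem.mp hx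
  rw [← List.getD_eq_getElem s 0 hi]
  exact entry_le_asc hs i hi

theorem getD_map_add {l : List ℕ} {N j : ℕ} (hj : j < l.length) :
    (l.map (· + N)).getD j 0 = l.getD j 0 + N := by
  rw [List.getD_eq_getElem _ 0 (by simpa using hj), List.getD_eq_getElem _ 0 hj,
    List.getElem_map]

theorem concat_isAscentSeq {c₁ c₂ : List ℕ} (h₁ : IsAscentSeq c₁) (h₂ : IsAscentSeq c₂)
    (hm : 0 < c₁.length) :
    IsAscentSeq (c₁ ++ c₂.map (· + listMax c₁)) := by
  set N := listMax c₁ with hN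
  set m := c₁.length with hmdef
  constructor
  · intro _
    rw [List.getD_append _ _ _ _ hm]
    exact h₁.1 hm
  · intro i hi0 hil
    rw [List.length_append, List.length_map] at hil
    rcases lt_or_ge i m with him | him
    · rw [List.getD_append _ _ _ _ him, List.take_append,
        show i - m = 0 by omega, List.take_zero, List.append_nil]
      exact h₁.2 i hi0 him
    · have hsub : i - m < c₂.length := by omega
      rw [List.getD_append_right _ _ _ _ him, getD_map_add hsub]
      have htake : (c₁ ++ c₂.map (· + N)).take i
          = c₁ ++ (c₂.take (i - m)).map (· + N) := by
        rw [List.take_append, List.take_of_length_le (by omega : m ≤ i),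
          List.map_take]
      rw [htake]
      have hasc : asc c₁ + asc (c₂.take (i-m)) ≤ asc (c₁ ++ (c₂.take (i - m)).map (· + N)) := by
        have := asc_append_le c₁ ((c₂.take (i - m)).map (· + N))
        rwa [asc_map_add] at this
      have hNle : N ≤ asc c₁ := listMax_le_asc h₁
      rcases Nat.eq_or_lt_of_le him with heq | hlt
      · have h0 : i - m = 0 := by omega
        rw [h0, h₂.1 (by omega), List.take_zero, List.map_nil, List.append_nil]
        omega
      · have := h₂.2 (i - m) (by omega) hsub
        omega

theorem concat_avoids {p c₁ c₂ : List ℕ} (hp : IsPattern p)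
    (hsi : SumIndecomposable p) (ha₁ : AvoidsPattern c₁ p) (ha₂ : AvoidsPattern c₂ p) :
    AvoidsPattern (c₁ ++ c₂.map (· + listMax c₁)) p := by
  set N := listMax c₁ with hN
  set m := c₁.length with hmdef
  set s := c₁ ++ c₂.map (· + N) with hs
  rintro ⟨idx, hmono, hlen, hiff⟩
  have hslen : s.length = m + c₂.length := by simp [hs, hmdef]
  have hlow : ∀ a : Fin p.length, idx a < m → s.getD (idx a) 0 = c₁.getD (idx a) 0 :=
    fun a ha => List.getD_append _ _ _ _ ha
  have hhigh : ∀ a : Fin p.length, m ≤ idx a →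
      s.getD (idx a) 0 = c₂.getD (idx a - m) 0 + N := by
    intro a ha
    rw [hs, List.getD_append_right _ _ _ _ ha, getD_map_add]
    have := hlen a
    rw [hslen] at this
    omega
  by_cases hall : ∀ a, idx a < m
  · exact ha₁ ⟨idx, hmono, hall, fun a b => by rw [hiff a b, hlow a (hall a), hlow b (hall b)]⟩
  push_neg at hall
  by_cases hall2 : ∀ a, m ≤ idx a
  · refine ha₂ ⟨fun a => idx a - m, ?_, ?_, ?_⟩
    · intro a b hab
      show idx a - m < idx b - m
      have := hmono hab
      have := hall2 a
      have := hall2 b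
      omega
    · intro a
      show idx a - m < c₂.length
      have h9 := hlen a
      rw [hslen] at h9
      have := hall2 a
      omega
    · intro a b
      show _ ↔ c₂.getD (idx a - m) 0 < c₂.getD (idx b - m) 0
      rw [hiff a b, hhigh a (hall2 a), hhigh b (hall2 b)]
      omega
  push_neg at hall2
  -- mixed case
  obtain ⟨a₁, ha₁'⟩ := hall2   -- idx a₁ < m
  obtain ⟨b₁, hb₁⟩ := hall    -- m ≤ idx b₁
  classical
  have hplen : 0 < p.length := a₁.pos
  let F : Finset (Fin p.length) := Finset.univ.filter (fun a => m ≤ idx a)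
  have hFne : F.Nonempty := ⟨b₁, by simp [F, hb₁]⟩
  let a₀ := F.min' hFne
  have ha₀ : m ≤ idx a₀ := by
    have := F.min'_mem hFne
    simpa [F] using this
  have hbelow : ∀ a : Fin p.length, a < a₀ → idx a < m := by
    intro a ha
    by_contra hcon
    push_neg at hcon
    have : a₀ ≤ a := F.min'_le a (by simp [F, hcon])
    exact absurd ha (not_lt.mpr this)
  have habove : ∀ a : Fin p.length, a₀ ≤ a → m ≤ idx a := by
    intro a ha
    exact le_trans ha₀ (hmono.monotone ha)
  have ht0 : 0 < (a₀ : ℕ) := by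
    rcases Nat.eq_zero_or_pos (a₀ : ℕ) with h0 | h
    · exfalso
      have : a₀ ≤ a₁ := by
        apply Fin.le_def.mpr; omega
      exact absurd (habove a₁ this) (by omega)
    · exact h
  have hnodup : p.Nodup := hp.nodup_iff.mpr List.nodup_range
  apply hsi
  refine ⟨(a₀ : ℕ), ht0, a₀.isLt, ?_⟩
  intro x hx y hy
  obtain ⟨a, ha, hxa⟩ := List.mem_iff_getElem.mp hx
  obtain ⟨b, hb, hyb⟩ := List.mem_iff_getElem.mp hy
  rw [List.length_take] at ha
  rw [List.length_drop] at hb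
  have ha' : a < p.length := by omega
  have hb' : (a₀ : ℕ) + b < p.length := by omega
  set A : Fin p.length := ⟨a, ha'⟩
  set B : Fin p.length := ⟨(a₀ : ℕ) + b, hb'⟩
  have hxA : x = p.get A := by
    rw [← hxa]; simp [List.getElem_take, A]
  have hyB : y = p.get B := by
    rw [← hyb]; simp [List.getElem_drop, B]
  have hAlow : idx A < m := hbelow A (by simp only [Fin.lt_def, A]; omega)
  have hBhigh : m ≤ idx B := habove B (by simp only [Fin.le_def, B]; omega)
  have hsA : s.getD (idx A) 0 ≤ N := by
    rw [hlow A hAlow]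
    rcases lt_or_ge (idx A) c₁.length with h | h
    · exact getD_le_listMax h
    · rw [List.getD_eq_default _ _ h]; omega
  have hsB : N ≤ s.getD (idx B) 0 := by rw [hhigh B hBhigh]; omega
  have hAB : p.get A ≠ p.get B := by
    intro hcon
    have : A = B := by
      have := List.Nodup.get_inj_iff hnodup |>.mp hcon
      exact this
    have : (A : ℕ) = (B : ℕ) := congrArg _ this
    simp [A, B] at this
    omega
  rcases lt_or_ge (s.getD (idx A) 0) (s.getD (idx B) 0) with h | h
  · rw [hxA, hyB]
    exact (hiff A B).mpr h
  · exfalso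
    have heq : s.getD (idx A) 0 = s.getD (idx B) 0 := by omega
    have h1 : ¬ p.get A < p.get B := by rw [hiff A B]; omega
    have h2 : ¬ p.get B < p.get A := by rw [hiff B A]; omega
    omega

theorem entry_le_k {s : List ℕ} (hs : IsAscentSeq s) {i k : ℕ} (hk : s.length = k)
    (hi : i < k) : s.getD i 0 ≤ k := by
  calc s.getD i 0 ≤ asc s := entry_le_asc hs i (by omega)
  _ ≤ s.length := asc_le_length s
  _ = k := hk

theorem finite_aas (p : List ℕ) (k : ℕ) :
    {s : List ℕ | s.length = k ∧ IsAscentSeq s ∧ AvoidsPattern s p}.Finite := by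
  rw [← Set.finite_coe_iff]
  apply Finite.of_injective
    (fun s : {s : List ℕ | s.length = k ∧ IsAscentSeq s ∧ AvoidsPattern s p} =>
      (fun i : Fin k => (⟨min ((s : List ℕ).getD i 0) k, by omega⟩ : Fin (k+1))))
  rintro ⟨s, hs1, hs2, hs3⟩ ⟨t, ht1, ht2, ht3⟩ h
  simp only [Subtype.mk.injEq]
  apply List.ext_getElem (by omega)
  intro i hi₁ hi₂
  have := congrFun h ⟨i, by omega⟩
  simp only [Fin.mk.injEq] at this
  rw [min_eq_left (entry_le_k hs2 hs1 (by omega)), min_eq_left (entry_le_k ht2 ht1 (by omega))] at this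
  rwa [List.getD_eq_getElem s 0 hi₁, List.getD_eq_getElem t 0 hi₂] at this


/-- Supermultiplicativity of the counts of π-avoiding ascent sequences. -/
theorem stmt1 (p : List ℕ) (hp : IsPattern p) (hp3 : 3 ≤ p.length)
    (hsi : SumIndecomposable p) (m n : ℕ) (hm : 1 ≤ m) (hn : 1 ≤ n) :
    ascentAvoidCount p m * ascentAvoidCount p n ≤ ascentAvoidCount p (m + n) := by
  classical
  set S1 := {s : List ℕ | s.length = m ∧ IsAscentSeq s ∧ AvoidsPattern s p} with hS1
  set S2 := {s : List ℕ | s.length = n ∧ IsAscentSeq s ∧ AvoidsPattern s p} with hS2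
  set S3 := {s : List ℕ | s.length = m + n ∧ IsAscentSeq s ∧ AvoidsPattern s p} with hS3
  set F : List ℕ × List ℕ → List ℕ := fun q => q.1 ++ q.2.map (· + listMax q.1) with hF
  have himg : F '' (S1 ×ˢ S2) ⊆ S3 := by
    rintro _ ⟨⟨c₁, c₂⟩, ⟨⟨hc1l, hc1a, hc1v⟩, ⟨hc2l, hc2a, hc2v⟩⟩, rfl⟩
    refine ⟨by simp [F, hc1l, hc2l], ?_, ?_⟩
    · exact concat_isAscentSeq hc1a hc2a (by omega)
    · exact concat_avoids hp hsi hc1v hc2v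
  have hinj : Set.InjOn F (S1 ×ˢ S2) := by
    rintro ⟨c₁, c₂⟩ ⟨⟨hc1l, _, _⟩, ⟨hc2l, _, _⟩⟩ ⟨d₁, d₂⟩ ⟨⟨hd1l, _, _⟩, ⟨hd2l, _, _⟩⟩ heq
    simp only [F] at heq
    obtain ⟨h1, h2⟩ := List.append_inj heq (by rw [hc1l, hd1l])
    have h3 : c₂ = d₂ := by
      rw [h1] at h2
      exact List.map_injective_iff.mpr (fun a b => by omega) h2
    exact Prod.ext h1 h3
  calc ascentAvoidCount p m * ascentAvoidCount p n
      = (S1 ×ˢ S2).ncard := by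
        rw [ascentAvoidCount, ascentAvoidCount, ← Nat.card_coe_set_eq,
          ← Nat.card_coe_set_eq, ← Nat.card_prod,
          ← Nat.card_coe_set_eq (S1 ×ˢ S2), Nat.card_congr (Equiv.Set.prod S1 S2)]
  _ = (F '' (S1 ×ˢ S2)).ncard := (Set.ncard_image_of_injOn hinj).symm
  _ ≤ S3.ncard := Set.ncard_le_ncard himg (finite_aas p (m+n))
  _ = ascentAvoidCount p (m + n) := rfl
end

section
/- The number of ascent sequences of length n avoiding the pattern 012 (three strictly increasing entries) is 2^{n−1} for n ≥ 1. -/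
open Filter Topology

lemma asc_pos_ascent (t : List ℕ) (h : 0 < asc t) :
    ∃ j, j + 1 < t.length ∧ t.getD j 0 < t.getD (j+1) 0 := by
  unfold asc at h
  rw [List.length_pos_iff_ne_nil] at h
  obtain ⟨p, hp⟩ := List.exists_mem_of_ne_nil _ h
  rw [List.mem_filter] at hp
  obtain ⟨hmem, hlt⟩ := hp
  obtain ⟨j, hj, hje⟩ := List.getElem_of_mem hmem
  rw [List.getElem_zip] at hje
  have hjlen : j + 1 < t.length := by
    have := hj
    simp [List.length_zip, List.length_tail] at this
    omega
  refine ⟨j, hjlen, ?_⟩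
  have h1 : t[j]'(by omega) = p.1 := by rw [← hje]
  have h2 : t.tail[j]'(by simp [List.length_tail]; omega) = p.2 := by rw [← hje]
  rw [List.getElem_tail] at h2
  rw [List.getD_eq_getElem t 0 (by omega), List.getD_eq_getElem t 0 hjlen, h1, h2]
  simpa using hlt

lemma small_of_avoid (s : List ℕ) (ha : IsAscentSeq s) (hc : ¬ Contains012 s) :
    ∀ x ∈ s, x ≤ 1 := by
  by_contra hbig
  push_neg at hbig
  obtain ⟨x, hx, hx2⟩ := hbig
  obtain ⟨i0, hi0, hi0e⟩ := List.getElem_of_mem hx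
  have hP : ∃ i, i < s.length ∧ 2 ≤ s.getD i 0 := by
    exact ⟨i0, hi0, by rw [List.getD_eq_getElem s 0 hi0, hi0e]; omega⟩
  classical
  set i := Nat.find hP with hidef
  obtain ⟨hilen, hival⟩ := Nat.find_spec hP
  rw [← hidef] at hilen hival
  have hmin : ∀ j < i, j < s.length → s.getD j 0 ≤ 1 := by
    intro j hj hjl
    have := Nat.find_min hP hj
    push_neg at this
    have := this hjl
    omega
  have hipos : 0 < i := by
    rcases Nat.eq_zero_or_pos i with h0 | h
    · exfalso; have := ha.1 (by omega); rw [h0] at hival; omega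
    · exact h
  have hbound := ha.2 i hipos hilen
  have hasc : 0 < asc (s.take i) := by omega
  obtain ⟨j, hjlen, hjasc⟩ := asc_pos_ascent _ hasc
  have htl : (s.take i).length = i := by
    rw [List.length_take]; omega
  rw [htl] at hjlen
  have hgt1 : (s.take i).getD j 0 = s.getD j 0 := by
    rw [List.getD_eq_getElem _ 0 (by rw [htl]; omega),
        List.getElem_take]
    exact (List.getD_eq_getElem s 0 (by omega)).symm
  have hgt2 : (s.take i).getD (j+1) 0 = s.getD (j+1) 0 := by
    rw [List.getD_eq_getElem _ 0 (by rw [htl]; omega),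
        List.getElem_take]
    exact (List.getD_eq_getElem s 0 (by omega)).symm
  rw [hgt1, hgt2] at hjasc
  apply hc
  refine ⟨j, j+1, i, by omega, by omega, hilen, hjasc, ?_⟩
  have := hmin (j+1) (by omega) (by omega)
  omega

/-- The number of 012-avoiding ascent sequences of length `n` is `2^(n-1)`. -/
theorem stmt11 (n : ℕ) (hn : 1 ≤ n) :
    {s : List ℕ | s.length = n ∧ IsAscentSeq s ∧ ¬ Contains012 s}.ncard =
      2 ^ (n - 1) := by
  classical
  set f : (Fin (n-1) → Bool) → List ℕ :=
    fun g => 0 :: List.ofFn (fun i => if g i then 1 else 0) with hf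
  have hmemf : ∀ g, ∀ x ∈ f g, x ≤ 1 := by
    intro g x hx
    rw [hf] at hx
    rcases List.mem_cons.1 hx with h | h
    · omega
    · obtain ⟨i, hi⟩ := List.mem_ofFn.1 h
      split_ifs at hi <;> omega
  have hset : {s : List ℕ | s.length = n ∧ IsAscentSeq s ∧ ¬ Contains012 s}
      = Set.range f := by
    ext s
    simp only [Set.mem_setOf_eq, Set.mem_range]
    constructor
    · rintro ⟨hlen, hasc, hc⟩
      have hsmall := small_of_avoid s hasc hc
      have hne : s ≠ [] := by
        intro h; rw [h] at hlen; simp at hlen; omega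
      obtain ⟨a, t, rfl⟩ := List.exists_cons_of_ne_nil hne
      have ha0 : a = 0 := by
        have := hasc.1 (by simp)
        simpa using this
      have htlen : t.length = n - 1 := by
        simp at hlen; omega
      refine ⟨fun i => decide (t.getD i 0 = 1), ?_⟩
      have htail : (List.ofFn fun i : Fin (n-1) =>
          if decide (t.getD (i : ℕ) 0 = 1) = true then (1:ℕ) else 0) = t := by
        apply List.ext_getElem (by simp [htlen])
        intro i h1 h2
        simp only [List.getElem_ofFn]
        have hmem : t[i] ∈ t := List.getElem_mem h2
        have hle : t[i] ≤ 1 := hsmall _ (List.mem_cons_of_mem _ hmem)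
        rw [List.getD_eq_getElem t 0 h2]
        split_ifs with hh
        · simp only [decide_eq_true_eq] at hh; omega
        · simp only [decide_eq_true_eq] at hh; omega
      rw [hf]
      simp only
      rw [htail, ha0]
    · rintro ⟨g, rfl⟩
      have hsm := hmemf g
      have hlen : (f g).length = n := by
        rw [hf]; simp; omega
      have hgetle : ∀ i, i < (f g).length → (f g).getD i 0 ≤ 1 := by
        intro i hi
        rw [List.getD_eq_getElem _ 0 hi]
        exact hsm _ (List.getElem_mem hi)
      refine ⟨hlen, ⟨?_, ?_⟩, ?_⟩
      · intro _; rw [hf]; simp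
      · intro i h0 hi
        have := hgetle i hi
        omega
      · rintro ⟨a, b, c, hab, hbc, hcl, h1, h2⟩
        have hc1 := hgetle c hcl
        have hb1 := hgetle b (by omega)
        omega
  rw [hset]
  have hinj : Function.Injective f := by
    intro g1 g2 h
    rw [hf] at h
    simp only [List.cons.injEq] at h
    have := List.ofFn_injective h.2
    funext i
    have := congrFun this i
    cases hg1 : g1 i <;> cases hg2 : g2 i <;> simp_all
  rw [← Set.image_univ, Set.ncard_image_of_injective _ hinj, Set.ncard_univ,
    Nat.card_eq_fintype_card]
  simp
end
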